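/- The tree-width of a finite graph G equals the minimum elimination width over all linear orders of V(G): tw(G) = min_{L} (ω(G_L) − 1), where G_L is the fill-in of G with respect to L. -/

import Mathlib

open SimpleGraph

variable {V : Type} [Fintype V]

/-- `G` has a tree-decomposition of width at most `k`: a finite tree `T` with
bags `X t` covering all vertices and edges, such that every vertex induces a
connected subtree, and every bag has at most `k+1` vertices. -/
def HasTreeDecompOfWidthLE (G : SimpleGraph V) (k : ℕ) : Prop :=
  ∃ (ι : Type) (_ : Fintype ι) (T : SimpleGraph ι) (X : ι → Finset V),
    T.IsTree ∧
    (∀ v : V, ∃ t, v ∈ X t) ∧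
    (∀ u v : V, G.Adj u v → ∃ t, u ∈ X t ∧ v ∈ X t) ∧
    (∀ v : V, (T.induce {t | v ∈ X t}).Connected) ∧
    (∀ t, (X t).card ≤ k + 1)

/-- The tree-width of a finite graph. -/
noncomputable def treewidth (G : SimpleGraph V) : ℕ :=
  sInf {k | HasTreeDecompOfWidthLE G k}

variable {V : Type} [Fintype V]

/-- `u` is strongly reachable (any length) from `v`: a path from `v` to `u`
whose internal vertices are all strictly greater than `v`. -/
def StrongRel (G : SimpleGraph V) (L : LinearOrder V) (v u : V) : Prop :=
  ∃ p : G.Walk v u, p.IsPath ∧ ∀ x ∈ p.support, x ≠ u → x ≠ v → L.lt v x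

/-- The fill-in of `G` with respect to a linear order `L`: each vertex is made
adjacent to all smaller vertices reachable by a path with internal vertices
greater than it. -/
def fillIn (G : SimpleGraph V) (L : LinearOrder V) : SimpleGraph V where
  Adj u w := u ≠ w ∧ ((L.lt u w ∧ StrongRel G L w u) ∨ (L.lt w u ∧ StrongRel G L u w))
  symm := by
    constructor
    intro u w h
    exact ⟨h.1.symm, h.2.symm⟩
  loopless := by constructor; intro u h; exact h.1 rfl


set_option linter.unusedSectionVars false
lemma ltL {L : LinearOrder V} {a b : V} : L.lt a b ↔ (letI := L; a < b) := Iff.rfl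

section
variable {G : SimpleGraph V} {L : LinearOrder V}

/-- walk-based sufficient condition for a fill-in edge, `a < b`. -/
lemma fillIn_adj_of_walk {a b : V}
    (hab : L.lt a b) (p : G.Walk b a)
    (hp : ∀ x ∈ p.support, x ≠ a → x ≠ b → L.lt b x) : (fillIn G L).Adj a b := by
  letI := L
  refine ⟨ne_of_lt hab, Or.inl ⟨hab, p.bypass, p.bypass_isPath, ?_⟩⟩
  intro x hx hxa hxb
  exact hp x (p.support_bypass_subset hx) hxa hxb

/-- characterization of fill-in adjacency for `a < b`. -/
lemma fillIn_adj_iff {a b : V}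
    (hab : L.lt a b) : (fillIn G L).Adj a b ↔
      ∃ p : G.Walk b a, ∀ x ∈ p.support, x ≠ a → x ≠ b → L.lt b x := by
  letI := L
  constructor
  · rintro ⟨-, h | h⟩
    · obtain ⟨-, p, -, hp⟩ := h
      exact ⟨p, hp⟩
    · exact absurd h.1 (asymm hab)
  · rintro ⟨p, hp⟩
    exact fillIn_adj_of_walk hab p hp

lemma fillIn_adj_lower {u u' v : V}
    (hu : L.lt u v) (hu' : L.lt u' v) (huu' : u ≠ u')
    (h1 : (fillIn G L).Adj u v) (h2 : (fillIn G L).Adj u' v) :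
    (fillIn G L).Adj u u' := by
  letI := L
  have key : ∀ a b : V, a < b → b < v → (fillIn G L).Adj a v → (fillIn G L).Adj b v →
      (fillIn G L).Adj a b := by
    intro a b hab hbv hav hbv'
    obtain ⟨p, hp⟩ := (fillIn_adj_iff (lt_trans hab hbv)).mp hav
    obtain ⟨q, hq⟩ := (fillIn_adj_iff hbv).mp hbv'
    refine fillIn_adj_of_walk hab (q.reverse.append p) ?_
    intro x hx hxa hxb
    rw [SimpleGraph.Walk.mem_support_append_iff] at hx
    by_cases hxv : x = v
    · exact hxv ▸ hbv
    · rcases hx with hx | hx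
      · rw [SimpleGraph.Walk.support_reverse, List.mem_reverse] at hx
        exact lt_trans hbv (hq x hx hxb hxv)
      · exact lt_trans hbv (lt_of_lt_of_le (hp x hx hxa hxv) le_rfl)
  rcases lt_or_gt_of_ne huu' with h | h
  · exact key u u' h hu' h1 h2
  · exact (key u' u h hu h2 h1).symm

lemma fillIn_adj_of_adj {a b : V}
    (h : G.Adj a b) : (fillIn G L).Adj a b := by
  letI := L
  have key : ∀ a b : V, a < b → G.Adj a b → (fillIn G L).Adj a b := by
    intro a b hab hadj
    refine fillIn_adj_of_walk hab (hadj.symm.toWalk) ?_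
    intro x hx hxa hxb
    simp only [SimpleGraph.Adj.toWalk, SimpleGraph.Walk.support_cons,
      SimpleGraph.Walk.support_nil, List.mem_cons, List.mem_singleton] at hx
    rcases hx with h1 | h1 | h1
    · exact absurd h1 hxb
    · exact absurd h1 hxa
    · simp at h1
  rcases lt_or_gt_of_ne h.ne with hab | hba
  · exact key a b hab h
  · exact (key b a hba h.symm).symm

end

section
variable {G : SimpleGraph V}

lemma isAcyclic_bot' : (⊥ : SimpleGraph Unit).IsAcyclic := by
  intro v c hc
  have h3 := hc.three_le_length
  cases c with
  | nil => simp at h3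
  | cons h q => exact h.elim

lemma hasTreeDecomp_of_order (G : SimpleGraph V) (L : LinearOrder V) :
    HasTreeDecompOfWidthLE G ((fillIn G L).cliqueNum - 1) := by
  classical
  letI := L
  cases isEmpty_or_nonempty V with
  | inl hemp =>
    refine ⟨Unit, inferInstance, ⊥, fun _ => ∅, ⟨?_, isAcyclic_bot'⟩, ?_, ?_, ?_, ?_⟩
    · haveI : Nonempty Unit := ⟨()⟩
      exact ⟨fun a b => by cases a; cases b; exact SimpleGraph.Reachable.refl _⟩
    · exact fun v => (hemp.false v).elim
    · exact fun u v _ => (hemp.false v).elim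
    · exact fun v => (hemp.false v).elim
    · intro t; simp
  | inr hne =>
    have huniv : (Finset.univ : Finset V).Nonempty := Finset.univ_nonempty
    set m : V := Finset.univ.min' huniv with hm
    have hm_le : ∀ v : V, m ≤ v := fun v => Finset.min'_le _ v (Finset.mem_univ v)
    set D : V → Finset V := fun v =>
      Finset.univ.filter (fun u => u < v ∧ (fillIn G L).Adj u v) with hD
    have hDmem : ∀ {u v : V}, u ∈ D v ↔ u < v ∧ (fillIn G L).Adj u v := by
      intro u v; simp [hD]
    set p : V → V := fun v => if h : (D v).Nonempty then (D v).max' h else m with hp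
    have hplt : ∀ v : V, v ≠ m → p v < v := by
      intro v hv
      by_cases h : (D v).Nonempty
      · have := (D v).max'_mem h
        rw [hDmem] at this
        simp only [hp, dif_pos h]
        exact this.1
      · simp only [hp, dif_neg h]
        exact lt_of_le_of_ne (hm_le v) (Ne.symm hv)
    set T : SimpleGraph V := {
      Adj := fun a b => a ≠ b ∧ ((a = p b ∧ b ≠ m) ∨ (b = p a ∧ a ≠ m))
      symm := by constructor; intro a b h; exact ⟨h.1.symm, h.2.symm⟩
      loopless := ⟨fun a h => h.1 rfl⟩ } with hT
    have hTadj : ∀ {a b : V}, T.Adj a b ↔ a ≠ b ∧ ((a = p b ∧ b ≠ m) ∨ (b = p a ∧ a ≠ m)) :=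
      Iff.rfl
    have hadjp : ∀ v : V, v ≠ m → T.Adj v (p v) :=
      fun v hv => ⟨(hplt v hv).ne', Or.inr ⟨rfl, hv⟩⟩
    -- connectivity
    have hreach : ∀ v : V, T.Reachable v m := by
      intro v
      induction v using WellFoundedLT.induction with
      | _ v IH =>
        by_cases hv : v = m
        · subst hv; exact SimpleGraph.Reachable.refl _
        · exact ((hadjp v hv).reachable).trans (IH (p v) (hplt v hv))
    have hconn : T.Connected := by
      haveI := hne
      exact ⟨fun a b => (hreach a).trans (hreach b).symm⟩
    -- acyclicity
    have hacyc : T.IsAcyclic := by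
      intro v c hc
      have hvs : v ∈ c.support := c.start_mem_support
      obtain ⟨x, hxs, hxmax⟩ := Finset.exists_max_image c.support.toFinset id
        ⟨v, List.mem_toFinset.mpr hvs⟩
      rw [List.mem_toFinset] at hxs
      have hc' := hc.rotate hxs
      set c' := c.rotate x hxs with hc'def
      have hsupp : ∀ z, z ∈ c'.support → z ≤ x := by
        intro z hz
        have hz' : z ∈ c.support := by
          rcases (SimpleGraph.Walk.mem_support_iff c').mp hz with rfl | ht
          · exact hxs
          · exact List.mem_of_mem_tail
              (((SimpleGraph.Walk.support_rotate c x hxs).mem_iff).mp ht)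
        exact hxmax z (List.mem_toFinset.mpr hz')
      -- destructure
      cases hcc : c' with
      | nil =>
        rw [hcc] at hc'
        have := hc'.three_le_length
        simp at this
      | cons hadj q =>
        rw [hcc] at hc' hsupp
        rw [SimpleGraph.Walk.cons_isCycle_iff] at hc'
        obtain ⟨hq, hedge⟩ := hc'
        rename_i y
        -- y is adjacent to x; find z at the other end
        have hxy : x ≠ y := hadj.ne
        have hnn : ¬ q.reverse.Nil := SimpleGraph.Walk.not_nil_of_ne hxy
        set z := q.reverse.getVert 1 with hz
        have hzadj : T.Adj x z := q.reverse.adj_snd hnn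
        have hzedge : s(x, z) ∈ q.edges := by
          have : s(x, z) ∈ q.reverse.edges := by
            rw [← SimpleGraph.Walk.cons_tail_eq q.reverse hnn, SimpleGraph.Walk.edges_cons]
            exact List.mem_cons_self
          rw [SimpleGraph.Walk.edges_reverse, List.mem_reverse] at this
          exact this
        have hzsupp : z ∈ q.support := by
          have : z ∈ q.reverse.support := SimpleGraph.Walk.snd_mem_support_of_mem_edges _
            (by rw [SimpleGraph.Walk.edges_reverse, List.mem_reverse]; exact hzedge)
          rwa [SimpleGraph.Walk.support_reverse, List.mem_reverse] at this
        have hysupp : y ∈ q.support := q.start_mem_support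
        -- both y and z must equal p x
        have key : ∀ w, T.Adj x w → w ∈ q.support → w = p x := by
          intro w hw hwsupp
          have hwle : w ≤ x := hsupp w (by
            rw [SimpleGraph.Walk.support_cons]; exact List.mem_cons_of_mem _ hwsupp)
          rcases hw.2 with ⟨hx1, hx2⟩ | ⟨hx1, hx2⟩
          · exfalso
            have := hplt w hx2
            rw [← hx1] at this
            exact absurd (lt_of_le_of_lt hwle this) (lt_irrefl w)
          · exact hx1
        have hyz : y ≠ z := fun h =>
          hedge (by rw [show s(x,y) = s(x,z) by rw [h]]; exact hzedge)
        exact hyz ((key y hadj hysupp).trans (key z hzadj hzsupp).symm)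
    -- the bags
    set X : V → Finset V := fun v => insert v (D v) with hX
    have hXclique : ∀ v : V, (fillIn G L).IsClique (X v : Set V) := by
      intro v a ha b hb hab
      simp only [hX, Finset.coe_insert, Set.mem_insert_iff, Finset.mem_coe] at ha hb
      rcases ha with rfl | ha
      · rcases hb with rfl | hb
        · exact absurd rfl hab
        · exact ((hDmem.mp hb).2).symm
      · rcases hb with rfl | hb
        · exact (hDmem.mp ha).2
        · have h1 := hDmem.mp ha
          have h2 := hDmem.mp hb
          exact fillIn_adj_lower h1.1 h2.1 hab h1.2 h2.2
    refine ⟨V, inferInstance, T, X, ⟨hconn, hacyc⟩, ?_, ?_, ?_, ?_⟩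
    · exact fun v => ⟨v, Finset.mem_insert_self v _⟩
    · -- edges covered
      intro u v huv
      have hfill := fillIn_adj_of_adj (L := L) huv
      rcases lt_or_gt_of_ne huv.ne with h | h
      · exact ⟨v, Finset.mem_insert_of_mem (hDmem.mpr ⟨h, hfill⟩), Finset.mem_insert_self v _⟩
      · exact ⟨u, Finset.mem_insert_self u _,
          Finset.mem_insert_of_mem (hDmem.mpr ⟨h, hfill.symm⟩)⟩
    · -- subtree connectivity
      intro u
      have humem : u ∈ {t | u ∈ X t} := Finset.mem_insert_self u _
      have hreach' : ∀ v (hv : v ∈ {t | u ∈ X t}),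
          (T.induce {t | u ∈ X t}).Reachable ⟨v, hv⟩ ⟨u, humem⟩ := by
        intro v
        induction v using WellFoundedLT.induction with
        | _ v IH =>
          intro hv
          by_cases hvu : v = u
          · subst hvu; exact Reachable.refl _
          · have hu_in : u ∈ D v := by
              have : u ∈ X v := hv
              rw [hX] at this
              simp only [Finset.mem_insert] at this
              exact this.resolve_left (Ne.symm hvu)
            have hu_lt : u < v := (hDmem.mp hu_in).1
            have hDne : (D v).Nonempty := ⟨u, hu_in⟩
            have hpv_eq : p v = (D v).max' hDne := by simp only [hp, dif_pos hDne]
            have hpv_mem : p v ∈ D v := hpv_eq ▸ (D v).max'_mem hDne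
            have hvm : v ≠ m := fun h => absurd (h ▸ hu_lt) (not_lt.mpr (hm_le u))
            have hple : u ≤ p v := hpv_eq ▸ (D v).le_max' u hu_in
            have hpS : p v ∈ {t | u ∈ X t} := by
              rcases eq_or_lt_of_le hple with heq | hlt
              · rw [← heq]; exact humem
              · have hadj' : (fillIn G L).Adj u (p v) :=
                  fillIn_adj_lower hu_lt (hDmem.mp hpv_mem).1 hlt.ne
                    (hDmem.mp hu_in).2 (hDmem.mp hpv_mem).2
                exact Finset.mem_insert_of_mem (hDmem.mpr ⟨hlt, hadj'⟩)
            have hstep : (T.induce {t | u ∈ X t}).Adj ⟨v, hv⟩ ⟨p v, hpS⟩ :=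
              hadjp v hvm
            exact (hstep.reachable).trans (IH (p v) (hplt v hvm) hpS)
      haveI : Nonempty {t | u ∈ X t} := ⟨⟨u, humem⟩⟩
      exact ⟨fun a b => by
        obtain ⟨a, ha⟩ := a; obtain ⟨b, hb⟩ := b
        exact (hreach' a ha).trans (hreach' b hb).symm⟩
    · -- width
      intro v
      have h1 : (X v).card ≤ (fillIn G L).cliqueNum :=
        SimpleGraph.IsClique.card_le_cliqueNum (tc := hXclique v)
      omega
end


lemma nat_base_inj {N a1 a2 b1 b2 : ℕ} (h1 : b1 < N) (h2 : b2 < N)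
    (h : a1 * N + b1 = a2 * N + b2) : a1 = a2 ∧ b1 = b2 := by
  have key : ∀ x y u v : ℕ, u < N → x < y → x * N + u = y * N + v → False := by
    intro x y u v hu hxy heq
    have h3 : (x + 1) * N ≤ y * N := Nat.mul_le_mul_right _ hxy
    rw [Nat.succ_mul] at h3
    omega
  have hA : a1 = a2 := by
    rcases Nat.lt_trichotomy a1 a2 with hl | heq | hg
    · exact (key a1 a2 b1 b2 h1 hl h).elim
    · exact heq
    · exact (key a2 a1 b2 b1 h2 hg h.symm).elim
  subst hA
  exact ⟨rfl, by omega⟩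

section
variable {G : SimpleGraph V}

lemma exists_order_of_decomp (G : SimpleGraph V) {k : ℕ}
    (hdec : HasTreeDecompOfWidthLE G k) :
    ∃ L : LinearOrder V, (fillIn G L).cliqueNum ≤ k + 1 := by
  classical
  obtain ⟨ι, hι, T, X, hT, hvert, hedge, hconn, hcard⟩ := hdec
  haveI := hι
  haveI : Nonempty ι := hT.isConnected.nonempty
  obtain ⟨r⟩ := ‹Nonempty ι›
  have hmin : ∀ v : V, ∃ t, v ∈ X t ∧ ∀ s, v ∈ X s → T.dist r t ≤ T.dist r s := by
    intro v
    obtain ⟨t0, ht0⟩ := hvert v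
    obtain ⟨t, ht, hm⟩ := Finset.exists_min_image
      (Finset.univ.filter (fun t => v ∈ X t)) (fun t => T.dist r t)
      ⟨t0, by simp [ht0]⟩
    exact ⟨t, (Finset.mem_filter.mp ht).2, fun s hs => hm s (by simp [hs])⟩
  choose top htop hmintop using hmin
  set f : V → ℕ := fun v => T.dist r (top v) with hf
  set n := Fintype.card V with hn
  set e := Fintype.equivFin V with he
  set g : V → ℕ := fun v => f v * (n+1) + (e v : ℕ) with hg
  have hglt : ∀ v, (e v : ℕ) < n + 1 := fun v => Nat.lt_succ_of_lt (e v).isLt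
  have hginj : Function.Injective g := by
    intro a b hab
    obtain ⟨h1, h2⟩ := nat_base_inj (hglt a) (hglt b) hab
    exact e.injective (Fin.val_injective h2)
  set L := LinearOrder.lift' g hginj with hL
  have hlt_iff : ∀ a b : V, L.lt a b ↔ g a < g b := fun a b => Iff.rfl
  have hmono : ∀ a b : V, L.lt a b → f a ≤ f b := by
    intro a b hab
    rw [hlt_iff] at hab
    by_contra hfb
    push_neg at hfb
    have h1 : (f b + 1) * (n+1) ≤ f a * (n+1) := Nat.mul_le_mul_right _ hfb
    have h2 : g b < (f b + 1) * (n+1) := by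
      simp only [hg, Nat.succ_mul]
      have := hglt b
      omega
    have h3 : f a * (n+1) ≤ g a := Nat.le_add_right _ _
    omega
  -- walks within the subtree of a vertex
  have hsub : ∀ (z : V) (a b : ι), z ∈ X a → z ∈ X b →
      ∃ q : T.Walk a b, ∀ x ∈ q.support, z ∈ X x := by
    intro z a b ha hb
    obtain ⟨q0⟩ := (hconn z) ⟨a, ha⟩ ⟨b, hb⟩
    refine ⟨(q0.map (SimpleGraph.Embedding.induce _).toHom : T.Walk a b), ?_⟩
    intro x hx
    replace hx : x ∈ (q0.map (SimpleGraph.Embedding.induce _).toHom).support := hx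
    rw [SimpleGraph.Walk.support_map, List.mem_map] at hx
    obtain ⟨⟨y, hy⟩, _, rfl⟩ := hx
    exact hy
  set Out : V → ι → Prop := fun w s =>
    s ≠ top w ∧ ∃ q : T.Walk r s, ∀ x ∈ q.support, x ≠ top w with hOut
  set AllIn : V → V → Prop := fun w z => ∀ s, z ∈ X s → ¬ Out w s with hAllIn
  have two_sides : ∀ (w z : V) (s s' : ι), ¬ Out w s → Out w s' →
      z ∈ X s → z ∈ X s' → z ∈ X (top w) := by
    intro w z s s' hs hs' hzs hzs'
    by_contra hzt
    obtain ⟨hs't, q', hq'⟩ := hs'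
    obtain ⟨W, hW⟩ := hsub z s' s hzs' hzs
    apply hs
    refine ⟨fun hse => hzt (hse ▸ hzs), q'.append W, ?_⟩
    intro x hx
    rw [SimpleGraph.Walk.mem_support_append_iff] at hx
    rcases hx with hx | hx
    · exact hq' x hx
    · exact fun hxe => hzt (hxe ▸ hW x hx)
  have hsplit : ∀ (a b : ι) (q : T.Walk a b) (x : ι) (hx : x ∈ q.support),
      T.dist a x + T.dist x b ≤ q.length := by
    intro a b q x hx
    calc T.dist a x + T.dist x b
        ≤ (q.takeUntil x hx).length + (q.dropUntil x hx).length :=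
          add_le_add (SimpleGraph.dist_le _) (SimpleGraph.dist_le _)
      _ = q.length := by rw [← SimpleGraph.Walk.length_append, q.take_spec hx]
  have allin_of_min : ∀ (w z : V), z ∈ X (top w) →
      (∀ s, z ∈ X s → f w ≤ T.dist r s) → AllIn w z := by
    intro w z hzt hmin' s hzs hout
    obtain ⟨hst, q, hq⟩ := hout
    set p₁ := q.bypass with hp₁
    have hp₁path : p₁.IsPath := q.bypass_isPath
    have hp₁av : ∀ x ∈ p₁.support, x ≠ top w :=
      fun x hx => hq x (q.support_bypass_subset hx)
    obtain ⟨gp, hgp, hglen⟩ := (hT.isConnected.preconnected r (top w)).exists_path_of_dist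
    obtain ⟨q₂w, hq₂w⟩ := hsub z (top w) s hzt hzs
    set q₂ := q₂w.bypass with hq₂
    have hq₂path : q₂.IsPath := q₂w.bypass_isPath
    have hq₂mem : ∀ x ∈ q₂.support, z ∈ X x :=
      fun x hx => hq₂w x (q₂w.support_bypass_subset hx)
    have hinter : ∀ y, y ∈ gp.support → y ∈ q₂.support → y = top w := by
      intro y hy1 hy2
      have h1 : f w ≤ T.dist r y := hmin' y (hq₂mem y hy2)
      have h2 : T.dist r y + T.dist y (top w) ≤ gp.length := hsplit r (top w) gp y hy1
      have h3 : T.dist y (top w) = 0 := by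
        rw [hglen] at h2
        have : T.dist r (top w) = f w := rfl
        omega
      exact ((hT.isConnected.preconnected y (top w)).dist_eq_zero_iff).mp h3
    have hP₂path : (gp.append q₂).IsPath := by
      rw [SimpleGraph.Walk.isPath_def, SimpleGraph.Walk.support_append, List.nodup_append]
      refine ⟨hgp.support_nodup, ?_, ?_⟩
      · exact ((SimpleGraph.Walk.isPath_def _).mp hq₂path).tail
      · intro y hy1 y' hy2 hyy'
        subst hyy'
        have hy2' : y ∈ q₂.support := List.mem_of_mem_tail hy2
        have hyt : y = top w := hinter y hy1 hy2'
        subst hyt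
        have hnodup := (SimpleGraph.Walk.isPath_def _).mp hq₂path
        rw [SimpleGraph.Walk.support_eq_cons] at hnodup
        exact (List.nodup_cons.mp hnodup).1 hy2
    have hpeq : p₁ = gp.append q₂ := (hT.existsUnique_path r s).unique hp₁path hP₂path
    apply hp₁av (top w) _ rfl
    rw [hpeq, SimpleGraph.Walk.mem_support_append_iff]
    exact Or.inl gp.end_mem_support
  have mem_of_allin : ∀ (w u : V), AllIn w u → f u ≤ f w → u ∈ X (top w) := by
    intro w u hall hfu
    have hhu : ¬ Out w (top u) := hall (top u) (htop u)
    by_cases hEq : top u = top w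
    · exact hEq ▸ htop u
    · exfalso
      obtain ⟨gp, hgp, hglen⟩ := (hT.isConnected.preconnected r (top u)).exists_path_of_dist
      by_cases hmem : top w ∈ gp.support
      · have h2 : T.dist r (top w) + T.dist (top w) (top u) ≤ gp.length :=
          hsplit r (top u) gp (top w) hmem
        rw [hglen] at h2
        have h3 : T.dist (top w) (top u) = 0 := by
          have hrw : T.dist r (top w) = f w := rfl
          have hru : T.dist r (top u) = f u := rfl
          omega
        exact hEq (((hT.isConnected.preconnected (top w) (top u)).dist_eq_zero_iff).mp h3).symm
      · exact hhu ⟨hEq, gp, fun x hx hxe => hmem (hxe ▸ hx)⟩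
  have allinw : ∀ w : V, AllIn w w := fun w => allin_of_min w w (htop w) (hmintop w)
  have step : ∀ (w u y : V) (p : G.Walk y u), AllIn w y →
      (∀ x, x ∈ p.support → x ≠ u → (x = w ∨ L.lt w x)) → (u ∈ X (top w) ∨ AllIn w u) := by
    intro w u y p
    induction p with
    | nil => intro hy _; exact Or.inr hy
    | @cons a b c hadj q IH =>
      intro hy hint
      obtain ⟨s₀, hs₀a, hs₀b⟩ := hedge a b hadj
      have hs₀ : ¬ Out w s₀ := hy s₀ hs₀a
      by_cases hbu : b = c
      · subst hbu
        by_cases hex : ∃ s', b ∈ X s' ∧ Out w s'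
        · obtain ⟨s', h1, h2⟩ := hex
          exact Or.inl (two_sides w b s₀ s' hs₀ h2 hs₀b h1)
        · push_neg at hex
          exact Or.inr (fun s hs ho => hex s hs ho)
      · have hbsup : b ∈ (SimpleGraph.Walk.cons hadj q).support := by
          rw [SimpleGraph.Walk.support_cons]
          exact List.mem_cons_of_mem _ q.start_mem_support
        have hb' := hint b hbsup hbu
        have hAllb : AllIn w b := by
          rcases hb' with rfl | hlt
          · exact allinw b
          · by_cases hex : ∃ s', b ∈ X s' ∧ Out w s'
            · obtain ⟨s', h1, h2⟩ := hex
              have hbt : b ∈ X (top w) := two_sides w b s₀ s' hs₀ h2 hs₀b h1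
              have hfwb : f w ≤ f b := hmono _ _ hlt
              have hfbw : f b ≤ f w := hmintop b (top w) hbt
              have hAll : AllIn w b := allin_of_min w b hbt (fun s hs => by
                have h5 := hmintop b s hs
                have h6 : f b = T.dist r (top b) := rfl
                omega)
              exact absurd h2 (hAll s' h1)
            · push_neg at hex
              exact fun s hs ho => hex s hs ho
        exact IH hAllb (fun x hx hxu => hint x (by
          rw [SimpleGraph.Walk.support_cons]
          exact List.mem_cons_of_mem _ hx) hxu)
  have key : ∀ w u : V, L.lt u w → (fillIn G L).Adj u w → u ∈ X (top w) := by
    intro w u hlt hadj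
    obtain ⟨pw, hpw⟩ := (fillIn_adj_iff hlt).mp hadj
    rcases step w u w pw (allinw w) (fun x hx hxu => by
        by_cases hxw : x = w
        · exact Or.inl hxw
        · exact Or.inr (hpw x hx hxu hxw)) with h1 | h1
    · exact h1
    · exact mem_of_allin w u h1 (hmono _ _ hlt)
  refine ⟨L, ?_⟩
  obtain ⟨s, hs⟩ := (fillIn G L).exists_isNClique_cliqueNum
  rcases Finset.eq_empty_or_nonempty s with rfl | hne
  · rw [← hs.2]
    simp
  · obtain ⟨w, hwmem, hwmax⟩ := @Finset.exists_max_image V V L s id hne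
    have hsubs : ∀ u ∈ s, u ∈ X (top w) := by
      intro u hu
      by_cases huw : u = w
      · exact huw ▸ htop w
      · have hlt : L.lt u w := by
          letI := L
          exact lt_of_le_of_ne (hwmax u hu) huw
        exact key w u hlt (hs.1 hu hwmem huw)
    calc (fillIn G L).cliqueNum = s.card := hs.2.symm
      _ ≤ (X (top w)).card := Finset.card_le_card (fun u hu => hsubs u hu)
      _ ≤ k + 1 := hcard (top w)
end

/-- The tree-width of `G` equals the minimum elimination width over all linear
orders: `tw(G) = min_L (ω(G_L) − 1)`, where `G_L` is the fill-in and `ω` the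
clique number. -/
theorem treewidth_eq_min_elimination_width (G : SimpleGraph V) :
    treewidth G = sInf {m | ∃ L : LinearOrder V, m = (fillIn G L).cliqueNum - 1} := by
  classical
  have L0 : LinearOrder V :=
    LinearOrder.lift' (Fintype.equivFin V) (Fintype.equivFin V).injective
  have hSne : {m | ∃ L : LinearOrder V, m = (fillIn G L).cliqueNum - 1}.Nonempty :=
    ⟨(fillIn G L0).cliqueNum - 1, L0, rfl⟩
  have hTne : {k | HasTreeDecompOfWidthLE G k}.Nonempty :=
    ⟨(fillIn G L0).cliqueNum - 1, hasTreeDecomp_of_order G L0⟩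
  apply le_antisymm
  · obtain ⟨L, hL⟩ := Nat.sInf_mem hSne
    exact Nat.sInf_le (show HasTreeDecompOfWidthLE G _ by
      rw [hL]; exact hasTreeDecomp_of_order G L)
  · have hmem : HasTreeDecompOfWidthLE G (treewidth G) := Nat.sInf_mem hTne
    obtain ⟨L, hL⟩ := exists_order_of_decomp G hmem
    have h2 : (fillIn G L).cliqueNum - 1 ≤ treewidth G := by omega
    exact le_trans (Nat.sInf_le ⟨L, rfl⟩) h2
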